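/- Stochastic extinction theorem: let Y be the mean-reverting OU process dY = −αY dt + σ dB, Y(0)=0, and let I(t) = N i0 e^{νt+NY(t)} / (N − i0 + i0 e^{νt+NY(t)} + i0(γ+μ)∫_0^t e^{νs+NY(s)}ds) with i0 ∈ (0,N). If ν = βN − (γ+μ) ≤ 0, then almost surely lim_{t→∞} I(t) = 0. -/

import Mathlib

set_option maxHeartbeats 1000000
open MeasureTheory ProbabilityTheory Filter Set Real
open scoped NNReal ENNReal

lemma tail_half (v : ℝ≥0) (hv : v ≠ 0) (x c : ℝ)
    (S : Set ℝ)
    (hpt : ∀ y ∈ S, gaussianPDFReal 0 v y ≤ Real.exp (-x^2/(2*v)) * gaussianPDFReal c v y) :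
    gaussianReal 0 v S ≤ ENNReal.ofReal (Real.exp (-x^2/(2*v))) := by
  rw [gaussianReal_apply 0 hv]
  calc ∫⁻ y in S, gaussianPDF 0 v y
      ≤ ∫⁻ y in S, ENNReal.ofReal (Real.exp (-x^2/(2*v))) * gaussianPDF c v y := by
        refine setLIntegral_mono ((measurable_gaussianPDF c v).const_mul _) fun y hy => ?_
        rw [gaussianPDF, gaussianPDF, ← ENNReal.ofReal_mul (Real.exp_nonneg _)]
        exact ENNReal.ofReal_le_ofReal (hpt y hy)
    _ ≤ ENNReal.ofReal (Real.exp (-x^2/(2*v))) * ∫⁻ y, gaussianPDF c v y := by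
        rw [lintegral_const_mul _ (measurable_gaussianPDF c v)]
        gcongr
        exact Measure.restrict_le_self
    _ = ENNReal.ofReal (Real.exp (-x^2/(2*v))) := by
        rw [lintegral_gaussianPDF_eq_one c hv, mul_one]

private lemma exp_pdf_aux {a p q r : ℝ} (ha : 0 ≤ a) (h : p ≤ q + r) :
    a * Real.exp p ≤ Real.exp q * (a * Real.exp r) := by
  rw [mul_comm (Real.exp q), mul_assoc, ← Real.exp_add]
  exact mul_le_mul_of_nonneg_left (Real.exp_le_exp.2 (by linarith)) ha

lemma gaussian_abs_tail (v : ℝ≥0) {x : ℝ} (hx : 0 ≤ x) :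
    gaussianReal 0 v {y : ℝ | x ≤ |y|} ≤ ENNReal.ofReal (2 * Real.exp (-x^2/(2*(v:ℝ)))) := by
  by_cases hv : v = 0
  · subst hv
    calc gaussianReal 0 0 {y : ℝ | x ≤ |y|} ≤ 1 := prob_le_one
      _ ≤ ENNReal.ofReal (2 * Real.exp (-x^2/(2*((0:ℝ≥0):ℝ)))) := by
          simp only [NNReal.coe_zero, mul_zero, div_zero, Real.exp_zero, mul_one]
          norm_num
  · have hvpos : (0:ℝ) < v := lt_of_le_of_ne v.coe_nonneg (by exact_mod_cast (Ne.symm hv))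
    have hsub : {y : ℝ | x ≤ |y|} ⊆ Ici x ∪ Iic (-x) := by
      intro y hy
      rcases abs_cases y with ⟨h1, _⟩ | ⟨h1, _⟩
      · left; exact mem_Ici.2 (h1 ▸ hy)
      · right; simp only [mem_Iic]; linarith [hy.out, h1 ▸ hy.out]
    have h1 : gaussianReal 0 v (Ici x) ≤ ENNReal.ofReal (Real.exp (-x^2/(2*v))) := by
      refine tail_half v hv x x _ fun y hy => ?_
      simp only [gaussianPDFReal, sub_zero]
      refine exp_pdf_aux (by positivity) ?_
      rw [← add_div, div_le_div_iff_of_pos_right (by positivity)]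
      have : x ≤ y := hy
      nlinarith
    have h2 : gaussianReal 0 v (Iic (-x)) ≤ ENNReal.ofReal (Real.exp (-x^2/(2*v))) := by
      refine tail_half v hv x (-x) _ fun y hy => ?_
      simp only [gaussianPDFReal, sub_zero, sub_neg_eq_add]
      refine exp_pdf_aux (by positivity) ?_
      rw [← add_div, div_le_div_iff_of_pos_right (by positivity)]
      have : y ≤ -x := hy
      nlinarith
    calc gaussianReal 0 v {y : ℝ | x ≤ |y|} ≤ gaussianReal 0 v (Ici x ∪ Iic (-x)) :=
        measure_mono hsub
      _ ≤ gaussianReal 0 v (Ici x) + gaussianReal 0 v (Iic (-x)) := measure_union_le _ _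
      _ ≤ ENNReal.ofReal (Real.exp (-x^2/(2*v))) + ENNReal.ofReal (Real.exp (-x^2/(2*v))) := by
          gcongr
      _ = ENNReal.ofReal (2 * Real.exp (-x^2/(2*(v:ℝ)))) := by
          rw [← ENNReal.ofReal_add (Real.exp_nonneg _) (Real.exp_nonneg _)]
          ring_nf
structure IsStandardBrownianMotion {Ω : Type*} [MeasurableSpace Ω]
    (P : Measure Ω) (B : ℝ → Ω → ℝ) : Prop where
  isProb : IsProbabilityMeasure P
  init : ∀ ω, B 0 ω = 0
  meas : ∀ t, Measurable (B t)
  cont : ∀ᵐ ω ∂P, Continuous fun t => B t ω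
  gauss : ∀ s t : ℝ, 0 ≤ s → s ≤ t →
    Measure.map (fun ω => B t ω - B s ω) P = gaussianReal 0 (Real.toNNReal (t - s))
  indep : ∀ (n : ℕ) (u : Fin (n + 1) → ℝ), Monotone u → (∀ i, 0 ≤ u i) →
    iIndepFun
      (fun i : Fin n => fun ω => B (u i.succ) ω - B (u i.castSucc) ω) P

lemma inc_tail {Ω : Type*} [MeasurableSpace Ω] {P : Measure Ω} {B : ℝ → Ω → ℝ}
    (hB : IsStandardBrownianMotion P B) {s t x : ℝ} (hs : 0 ≤ s) (hst : s < t) (hx : 0 ≤ x) :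
    P {ω | x ≤ |B t ω - B s ω|} ≤ ENNReal.ofReal (2 * Real.exp (-x^2/(2*(t-s)))) := by
  have hmeas : Measurable fun ω => B t ω - B s ω := (hB.meas t).sub (hB.meas s)
  have hSmeas : MeasurableSet {y : ℝ | x ≤ |y|} :=
    measurableSet_le measurable_const measurable_abs
  have : P {ω | x ≤ |B t ω - B s ω|}
      = (Measure.map (fun ω => B t ω - B s ω) P) {y : ℝ | x ≤ |y|} := by
    rw [Measure.map_apply hmeas hSmeas]; rfl
  rw [this, hB.gauss s t hs hst.le]
  have hcoe : ((Real.toNNReal (t - s) : ℝ≥0) : ℝ) = t - s := Real.coe_toNNReal _ (by linarith)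
  calc gaussianReal 0 (Real.toNNReal (t-s)) {y : ℝ | x ≤ |y|}
      ≤ ENNReal.ofReal (2 * Real.exp (-x^2/(2*((Real.toNNReal (t-s) : ℝ≥0):ℝ)))) :=
        gaussian_abs_tail _ hx
    _ = ENNReal.ofReal (2 * Real.exp (-x^2/(2*(t-s)))) := by rw [hcoe]
open Finset in
lemma chain_dyadic {f : ℝ → ℝ} (hf : Continuous f) (n : ℕ) {c : ℝ} (hc : 0 ≤ c)
    (h : ∀ m k : ℕ, k < 2^m →
      |f ((n:ℝ) + (k+1)/2^m) - f ((n:ℝ) + k/2^m)| ≤ c * ((2:ℝ)^(-(m:ℝ)/4)))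
    {t : ℝ} (ht1 : (n:ℝ) ≤ t) (ht2 : t ≤ n+1) : |f t - f n| ≤ 8 * c := by
  set r : ℝ := (2:ℝ)^(-(1:ℝ)/4) with hr_def
  have hr0 : 0 < r := Real.rpow_pos_of_pos (by norm_num) _
  have hr78 : r ≤ 7/8 := by
    have h2 : ((8/7:ℝ))^((4:ℕ):ℝ) ≤ 2 := by
      rw [Real.rpow_natCast]; norm_num
    have h3 : (8/7:ℝ) ≤ (2:ℝ)^((1:ℝ)/4) := by
      have := Real.rpow_le_rpow (by positivity) h2 (by norm_num : (0:ℝ) ≤ 1/4)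
      rwa [← Real.rpow_mul (by norm_num), show ((4:ℕ):ℝ) * (1/4) = 1 by norm_num,
        Real.rpow_one] at this
    have h4 : r = ((2:ℝ)^((1:ℝ)/4))⁻¹ := by
      rw [hr_def, ← Real.rpow_neg (by norm_num)]; norm_num
    rw [h4]
    rw [inv_le_comm₀ (by positivity) (by norm_num)]
    linarith
  have hr1 : r < 1 := lt_of_le_of_lt hr78 (by norm_num)
  have hsum : ∀ M : ℕ, ∑ i ∈ range M, r^i ≤ 8 := by
    intro M
    have h1 : ∑ i ∈ range M, r^i ≤ (1-r)⁻¹ :=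
      ((summable_geometric_of_lt_one hr0.le hr1).sum_le_tsum (range M) (fun i _ => (pow_pos hr0 i).le)
        ).trans_eq (tsum_geometric_of_lt_one hr0.le hr1)
    have : (1-r)⁻¹ ≤ 8 := by
      rw [inv_le_comm₀ (by linarith) (by norm_num)]
      linarith
    linarith
  have hrm : ∀ m : ℕ, (2:ℝ)^(-(m:ℝ)/4) = r^m := by
    intro m
    rw [hr_def, ← Real.rpow_natCast ((2:ℝ)^(-(1:ℝ)/4)) m, ← Real.rpow_mul (by norm_num)]
    congr 1; ring
  have key : ∀ m : ℕ, ∀ j : ℕ, j ≤ 2^m →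
      |f ((n:ℝ) + j/2^m) - f n| ≤ c * ∑ i ∈ range (m+1), r^i := by
    intro m
    induction m with
    | zero =>
      intro j hj
      interval_cases j
      · simp [hc]
      · have := h 0 0 (by norm_num)
        simp only [pow_zero] at this ⊢
        rw [hrm 0] at this
        simpa using this
    | succ m ih =>
      intro j hj
      rcases Nat.even_or_odd j with ⟨j', hj'⟩ | ⟨j', hj'⟩
      · subst hj'
        have hj'le : j' ≤ 2^m := by omega
        have heq : (n:ℝ) + (j' + j' : ℕ)/2^(m+1) = (n:ℝ) + (j':ℕ)/2^m := by
          push_cast; ring_nf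
        rw [heq]
        refine (ih j' hj'le).trans ?_
        have : (0:ℝ) ≤ r^(m+1) := (pow_pos hr0 _).le
        rw [sum_range_succ (fun i => r^i) (m+1)]
        nlinarith [ih j' hj'le]
      · subst hj'
        have hj'lt : j' < 2^m := by omega
        have h2j : 2*j' < 2^(m+1) := by omega
        have heq : (n:ℝ) + (2*j' : ℕ)/2^(m+1) = (n:ℝ) + (j':ℕ)/2^m := by
          push_cast; ring_nf
        have tri : |f ((n:ℝ) + (2*j'+1 : ℕ)/2^(m+1)) - f n| ≤
            |f ((n:ℝ) + (2*j'+1 : ℕ)/2^(m+1)) - f ((n:ℝ) + (2*j' : ℕ)/2^(m+1))|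
            + |f ((n:ℝ) + (2*j' : ℕ)/2^(m+1)) - f n| := abs_sub_le _ _ _
        have hstep := h (m+1) (2*j') h2j
        have hcast : ((2*j' : ℕ) : ℝ) + 1 = ((2*j'+1 : ℕ) : ℝ) := by push_cast; ring
        rw [hcast] at hstep
        rw [heq] at tri hstep
        have hih := ih j' hj'lt.le
        rw [hrm (m+1)] at hstep
        calc |f ((n:ℝ) + (2*j'+1 : ℕ)/2^(m+1)) - f n|
            ≤ c * r^(m+1) + c * ∑ i ∈ range (m+1), r^i := by
              refine tri.trans ?_; gcongr
          _ = c * ∑ i ∈ range (m+2), r^i := by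
              rw [sum_range_succ (fun i => r^i) (m+1)]; ring
  -- now pass to the limit
  have hbound : ∀ m : ℕ, ∀ j : ℕ, j ≤ 2^m → |f ((n:ℝ) + j/2^m) - f n| ≤ 8 * c := by
    intro m j hj
    refine (key m j hj).trans ?_
    calc c * ∑ i ∈ range (m+1), r^i ≤ c * 8 := by
          have := hsum (m+1); nlinarith
      _ = 8 * c := by ring
  set p : ℕ → ℝ := fun m => (n:ℝ) + (⌊(t - n)*2^m⌋₊ : ℝ)/2^m with hp_def
  have hfloor : ∀ m : ℕ, ⌊(t - n)*2^m⌋₊ ≤ 2^m := by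
    intro m
    have h1 : (t - n)*2^m ≤ ((2^m : ℕ) : ℝ) := by
      push_cast
      nlinarith [pow_pos (show (0:ℝ) < 2 by norm_num) m]
    calc ⌊(t - n)*2^m⌋₊ ≤ ⌊((2^m : ℕ) : ℝ)⌋₊ := Nat.floor_le_floor h1
      _ = 2^m := Nat.floor_natCast _
  have hplim : Tendsto p atTop (nhds t) := by
    have h1 : ∀ m : ℕ, |p m - t| ≤ (1/2)^m := by
      intro m
      have hpow : (0:ℝ) < 2^m := by positivity
      set q : ℝ := (⌊(t - n)*2^m⌋₊ : ℝ) with hq_def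
      have hfl : q ≤ (t - n)*2^m := Nat.floor_le (by nlinarith)
      have hfg : (t - n)*2^m - 1 < q := Nat.sub_one_lt_floor _
      have h12 : (1/2:ℝ)^m = 1/2^m := by rw [div_pow, one_pow]
      have e1 : q / 2^m ≤ t - n := by rw [div_le_iff₀ hpow]; linarith
      have e2 : (t - n) - 1/2^m ≤ q/2^m := by
        rw [le_div_iff₀ hpow]
        have hmul : ((t-n) - 1/2^m) * 2^m = (t-n)*2^m - 1 := by field_simp
        rw [hmul]; linarith
      have hpm : p m - t = q/2^m - (t - n) := by rw [hp_def]; simp only [← hq_def]; ring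
      rw [abs_le, hpm, h12]
      constructor <;> [linarith; nlinarith [hpow, div_nonneg (by positivity : (0:ℝ) ≤ 1) hpow.le]]
    have h2 : Tendsto (fun m : ℕ => (1/2:ℝ)^m) atTop (nhds 0) :=
      tendsto_pow_atTop_nhds_zero_of_lt_one (by norm_num) (by norm_num)
    rw [tendsto_iff_dist_tendsto_zero]
    refine squeeze_zero (fun m => dist_nonneg) (fun m => ?_) h2
    rw [Real.dist_eq]; exact h1 m
  have hflim : Tendsto (fun m => |f (p m) - f n|) atTop (nhds (|f t - f n|)) := by
    have := (hf.continuousAt (x := t)).tendsto.comp hplim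
    exact ((this.sub tendsto_const_nhds).abs)
  refine le_of_tendsto hflim (Eventually.of_forall fun m => ?_)
  exact hbound m _ (hfloor m)

section BC
variable {Ω : Type*} [MeasurableSpace Ω] {P : Measure Ω} {B : ℝ → Ω → ℝ}

lemma exp18_ge_four : (4:ℝ) ≤ Real.exp 1.8 := by
  have h16 : (1.6:ℝ) ≤ Real.exp 0.6 := by
    have := Real.add_one_le_exp (0.6:ℝ); linarith
  have h3 : ((1.6:ℝ))^(3:ℕ) ≤ (Real.exp 0.6)^(3:ℕ) := pow_le_pow_left₀ (by norm_num) h16 3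
  have he : (Real.exp 0.6)^(3:ℕ) = Real.exp 1.8 := by
    rw [← Real.exp_nat_mul]; norm_num
  rw [← he]; nlinarith

lemma sqrt2_ge : (1.4:ℝ) ≤ Real.sqrt 2 := by
  nlinarith [Real.sq_sqrt (by norm_num : (0:ℝ) ≤ 2), Real.sqrt_nonneg 2]

lemma sqrt2_pow_ge (m : ℕ) : 1 + 0.4*(m:ℝ) ≤ (Real.sqrt 2)^m := by
  have h1 : (1 + 0.4*(m:ℝ)) ≤ (1.4:ℝ)^m := by
    have := one_add_mul_le_pow (by norm_num : (-2:ℝ) ≤ 0.4) m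
    calc 1 + 0.4*(m:ℝ) = 1 + (m:ℝ)*0.4 := by ring
      _ ≤ (1+0.4)^m := this
      _ = (1.4:ℝ)^m := by norm_num
  exact h1.trans (pow_le_pow_left₀ (by norm_num) sqrt2_ge m)

lemma qpow_eq (m : ℕ) : (2:ℝ)^(-(m:ℝ)/4) = ((2:ℝ)^(-(1:ℝ)/4))^m := by
  rw [← Real.rpow_natCast ((2:ℝ)^(-(1:ℝ)/4)) m, ← Real.rpow_mul (by norm_num)]
  congr 1; ring

lemma qsq : (((2:ℝ)^(-(1:ℝ)/4))^(2:ℕ)) * 2 = Real.sqrt 2 := by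
  have h1 : ((2:ℝ)^(-(1:ℝ)/4))^(2:ℕ) = (2:ℝ)^(-(1:ℝ)/2) := by
    rw [← Real.rpow_natCast ((2:ℝ)^(-(1:ℝ)/4)) 2, ← Real.rpow_mul (by norm_num)]
    norm_num
  have h2 : (2:ℝ)^(-(1:ℝ)/2) = (Real.sqrt 2)⁻¹ := by
    rw [show -(1:ℝ)/2 = -((1:ℝ)/2) by ring, Real.rpow_neg (by norm_num), ← Real.sqrt_eq_rpow]
  have h3 := Real.mul_self_sqrt (by norm_num : (0:ℝ) ≤ 2)
  have h4 : Real.sqrt 2 ≠ 0 := by positivity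
  rw [h1, h2]
  field_simp
  rw [Real.sq_sqrt (by norm_num : (0:ℝ) ≤ 2)]

lemma goalA (hB : IsStandardBrownianMotion P B) :
    ∀ᵐ ω ∂P, ∀ᶠ n : ℕ in atTop, ∀ m k : ℕ, k < 2^m →
      |B ((n:ℝ) + ((k:ℝ)+1)/2^m) ω - B ((n:ℝ) + (k:ℝ)/2^m) ω|
        ≤ (3 + 3*Real.sqrt (Real.log ((n:ℝ)+2))) * (2:ℝ)^(-(m:ℝ)/4) := by
  classical
  set q : ℝ := (2:ℝ)^(-(1:ℝ)/4) with hq_def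
  have hq0 : 0 < q := Real.rpow_pos_of_pos (by norm_num) _
  set lam : ℕ → ℕ → ℝ := fun n m => (3 + 3*Real.sqrt (Real.log ((n:ℝ)+2))) * q^m with hlam_def
  have hL0 : ∀ n : ℕ, 0 ≤ Real.log ((n:ℝ)+2) := fun n => Real.log_nonneg (by push_cast; linarith)
  have hlam0 : ∀ n m, 0 ≤ lam n m := by
    intro n m
    have := Real.sqrt_nonneg (Real.log ((n:ℝ)+2))
    positivity
  set E : ℕ → ℕ → ℕ → Set Ω := fun n m k =>
    {ω | lam n m ≤ |B ((n:ℝ) + ((k:ℝ)+1)/2^m) ω - B ((n:ℝ) + (k:ℝ)/2^m) ω|} with hE_def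
  set S : ℕ → Set Ω := fun n => ⋃ m : ℕ, ⋃ k ∈ Finset.range (2^m), E n m k with hS_def
  have hEbound : ∀ n m k : ℕ, P (E n m k)
      ≤ ENNReal.ofReal (2 * Real.exp (-(4.5 + 4.5*Real.log ((n:ℝ)+2) + 1.8*(m:ℝ)))) := by
    intro n m k
    have hpow : (0:ℝ) < 2^m := by positivity
    have hst : (n:ℝ) + (k:ℝ)/2^m < (n:ℝ) + ((k:ℝ)+1)/2^m := by
      have : (k:ℝ)/2^m < ((k:ℝ)+1)/2^m := by
        apply div_lt_div_of_pos_right ?_ hpow; linarith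
      linarith
    have hs0 : (0:ℝ) ≤ (n:ℝ) + (k:ℝ)/2^m := by positivity
    have h1 := inc_tail hB hs0 hst (hlam0 n m)
    refine h1.trans (ENNReal.ofReal_le_ofReal ?_)
    have hdiff : ((n:ℝ) + ((k:ℝ)+1)/2^m) - ((n:ℝ) + (k:ℝ)/2^m) = 1/2^m := by
      field_simp
      ring
    rw [hdiff]
    gcongr 2 * Real.exp ?_
    set L := Real.log ((n:ℝ)+2)
    have hkey : (4.5 + 4.5*L + 1.8*(m:ℝ)) ≤ (lam n m)^2 * 2^m / 2 := by
      have hl2 : (lam n m)^2 = (3+3*Real.sqrt L)^2 * (q^(2:ℕ))^m := by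
        rw [hlam_def]; ring
      have hq2m : (q^(2:ℕ))^m * 2^m = (Real.sqrt 2)^m := by
        rw [← mul_pow, qsq]
      have hsq : Real.sqrt L ^ 2 = L := Real.sq_sqrt (hL0 n)
      have h9 : 9 + 9*L ≤ (3+3*Real.sqrt L)^2 := by
        nlinarith [Real.sqrt_nonneg L]
      have hs2 : 1 + 0.4*(m:ℝ) ≤ (Real.sqrt 2)^m := sqrt2_pow_ge m
      have hfact : (lam n m)^2 * 2^m = (3+3*Real.sqrt L)^2 * (Real.sqrt 2)^m := by
        rw [hl2, mul_assoc, hq2m]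
      rw [hfact]
      have hm0 : (0:ℝ) ≤ (m:ℝ) := Nat.cast_nonneg m
      nlinarith [Real.sqrt_nonneg L, hL0 n]
    have h2m : -(lam n m)^2 / (2 * (1/2^m)) = -((lam n m)^2 * 2^m / 2) := by
      field_simp
    rw [h2m]
    linarith
  have hSbound : ∀ n : ℕ, P (S n)
      ≤ ENNReal.ofReal (32 * Real.exp (-(4.5*Real.log ((n:ℝ)+2)))) := by
    intro n
    set L := Real.log ((n:ℝ)+2) with hL_def
    set g : ℕ → ℝ := fun m => (2:ℝ)^m * (2 * Real.exp (-(4.5 + 4.5*L + 1.8*(m:ℝ)))) with hg_def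
    have hg_eq : g = fun m => (2*Real.exp (-(4.5+4.5*L))) * (2*Real.exp (-1.8))^m := by
      funext m
      rw [hg_def]
      simp only
      rw [mul_pow, ← Real.exp_nat_mul,
        show (-(4.5 + 4.5*L + 1.8*(m:ℝ))) = (-(4.5+4.5*L)) + ((m:ℝ)*(-1.8)) by ring,
        Real.exp_add]
      ring
    have hrho : 2*Real.exp (-1.8) ≤ 1/2 := by
      have hinv : (Real.exp 1.8)⁻¹ * Real.exp 1.8 = 1 := inv_mul_cancel₀ (ne_of_gt (Real.exp_pos _))
      rw [Real.exp_neg]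
      nlinarith [exp18_ge_four, inv_nonneg.2 (Real.exp_pos (1.8:ℝ)).le]
    have hrho0 : (0:ℝ) ≤ 2*Real.exp (-1.8) := by positivity
    have hrho1 : 2*Real.exp (-1.8) < 1 := lt_of_le_of_lt hrho (by norm_num)
    have hsumm : Summable g := by
      rw [hg_eq]
      exact (summable_geometric_of_lt_one hrho0 hrho1).mul_left _
    have htsum : ∑' m, g m ≤ 32 * Real.exp (-(4.5*L)) := by
      rw [hg_eq, tsum_mul_left, tsum_geometric_of_lt_one hrho0 hrho1]
      have hinv2 : (1 - 2*Real.exp (-1.8))⁻¹ ≤ 2 := by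
        rw [inv_le_comm₀ (by linarith) (by norm_num)]
        linarith
      have hsplit : Real.exp (-(4.5+4.5*L)) = Real.exp (-4.5) * Real.exp (-(4.5*L)) := by
        rw [← Real.exp_add]; ring_nf
      have he1 : Real.exp (-4.5) ≤ 1 := by
        rw [← Real.exp_zero]; exact Real.exp_le_exp.2 (by norm_num)
      have hx : (0:ℝ) ≤ Real.exp (-(4.5*L)) := (Real.exp_pos _).le
      have h2 : (0:ℝ) < 1 - 2*Real.exp (-1.8) := by linarith
      calc 2*Real.exp (-(4.5+4.5*L)) * (1 - 2*Real.exp (-1.8))⁻¹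
          ≤ 2*Real.exp (-(4.5+4.5*L)) * 2 := by
            apply mul_le_mul_of_nonneg_left hinv2 (by positivity)
        _ = 4 * (Real.exp (-4.5) * Real.exp (-(4.5*L))) := by rw [hsplit]; ring
        _ ≤ 32 * Real.exp (-(4.5*L)) := by nlinarith
    calc P (S n) ≤ ∑' m : ℕ, P (⋃ k ∈ Finset.range (2^m), E n m k) := measure_iUnion_le _
      _ ≤ ∑' m : ℕ, ENNReal.ofReal (g m) := by
          refine ENNReal.tsum_le_tsum fun m => ?_
          calc P (⋃ k ∈ Finset.range (2^m), E n m k)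
              ≤ ∑ k ∈ Finset.range (2^m), P (E n m k) := measure_biUnion_finset_le _ _
            _ ≤ ∑ _k ∈ Finset.range (2^m),
                ENNReal.ofReal (2 * Real.exp (-(4.5 + 4.5*L + 1.8*(m:ℝ)))) :=
                Finset.sum_le_sum fun k _ => hEbound n m k
            _ = (2^m : ℕ) • ENNReal.ofReal (2 * Real.exp (-(4.5 + 4.5*L + 1.8*(m:ℝ)))) := by
                rw [Finset.sum_const, Finset.card_range]
            _ = ENNReal.ofReal (g m) := by
                rw [nsmul_eq_mul]
                have h2m : ((2^m : ℕ) : ℝ≥0∞) = ENNReal.ofReal ((2:ℝ)^m) := by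
                  rw [← ENNReal.ofReal_natCast (2^m)]; norm_num
                rw [h2m, ← ENNReal.ofReal_mul (by positivity), hg_def]
      _ = ENNReal.ofReal (∑' m, g m) := by
          rw [ENNReal.ofReal_tsum_of_nonneg (fun m => by positivity) hsumm]
      _ ≤ ENNReal.ofReal (32 * Real.exp (-(4.5*L))) := ENNReal.ofReal_le_ofReal htsum
  have hh_le : ∀ n : ℕ, 32 * Real.exp (-(4.5*Real.log ((n:ℝ)+2))) ≤ 32 * (1/((n:ℝ)+1)^2) := by
    intro n
    have hpos : (0:ℝ) < (n:ℝ)+2 := by positivity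
    have hL := hL0 n
    have h1 : Real.exp (-(4.5*Real.log ((n:ℝ)+2))) ≤ Real.exp (-(2*Real.log ((n:ℝ)+2))) := by
      rw [Real.exp_le_exp]; linarith
    have h2 : Real.exp (-(2*Real.log ((n:ℝ)+2))) = (((n:ℝ)+2)^2)⁻¹ := by
      rw [show (2:ℝ)*Real.log ((n:ℝ)+2) = Real.log ((n:ℝ)+2) + Real.log ((n:ℝ)+2) by ring,
        Real.exp_neg, Real.exp_add, Real.exp_log hpos]
      ring_nf
    have h3 : (((n:ℝ)+2)^2)⁻¹ ≤ 1/((n:ℝ)+1)^2 := by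
      rw [one_div]
      apply inv_anti₀ (by positivity)
      nlinarith [Nat.cast_nonneg (α := ℝ) n]
    calc 32 * Real.exp (-(4.5*Real.log ((n:ℝ)+2)))
        ≤ 32 * (((n:ℝ)+2)^2)⁻¹ := by rw [← h2]; nlinarith
      _ ≤ 32 * (1/((n:ℝ)+1)^2) := by nlinarith
  have hsummable : Summable (fun n : ℕ => 32 * (1/((n:ℝ)+1)^2)) := by
    apply Summable.mul_left
    have h0 : Summable (fun n : ℕ => 1/(n:ℝ)^2) :=
      Real.summable_one_div_nat_pow.2 one_lt_two
    have := (summable_nat_add_iff 1).2 h0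
    refine this.congr fun n => ?_
    push_cast
    ring
  have hsummh : Summable (fun n : ℕ => 32 * Real.exp (-(4.5*Real.log ((n:ℝ)+2)))) :=
    Summable.of_nonneg_of_le (fun n => by positivity) hh_le hsummable
  have htop : ∑' n, P (S n) ≠ ⊤ := by
    apply ne_top_of_le_ne_top
      (b := ENNReal.ofReal (∑' n : ℕ, 32 * Real.exp (-(4.5*Real.log ((n:ℝ)+2)))))
      ENNReal.ofReal_ne_top
    calc ∑' n, P (S n) ≤ ∑' n : ℕ, ENNReal.ofReal (32 * Real.exp (-(4.5*Real.log ((n:ℝ)+2)))) :=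
          ENNReal.tsum_le_tsum hSbound
      _ = ENNReal.ofReal (∑' n : ℕ, 32 * Real.exp (-(4.5*Real.log ((n:ℝ)+2)))) :=
          (ENNReal.ofReal_tsum_of_nonneg (fun n => by positivity) hsummh).symm
  filter_upwards [MeasureTheory.ae_eventually_notMem htop] with ω hω
  filter_upwards [hω] with n hn
  intro m k hk
  have : ω ∉ E n m k := by
    intro hmem
    exact hn (by
      rw [hS_def]
      exact Set.mem_iUnion.2 ⟨m, Set.mem_iUnion₂.2 ⟨k, Finset.mem_range.2 hk, hmem⟩⟩)
  rw [hE_def] at this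
  simp only [Set.mem_setOf_eq, not_le] at this
  rw [qpow_eq m, ← hq_def]
  exact this.le

lemma goalF (hB : IsStandardBrownianMotion P B) :
    ∀ᵐ ω ∂P, ∀ᶠ n : ℕ in atTop, ∀ m : ℕ, m < n →
      |B (n:ℝ) ω - B (m:ℝ) ω|
        ≤ 3*Real.sqrt ((n:ℝ)-(m:ℝ)) * (1 + Real.sqrt (Real.log ((n:ℝ)+2))) := by
  classical
  have hL0 : ∀ n : ℕ, 0 ≤ Real.log ((n:ℝ)+2) := fun n => Real.log_nonneg (by push_cast; linarith)
  set bd : ℕ → ℕ → ℝ := fun n m =>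
    3*Real.sqrt ((n:ℝ)-(m:ℝ)) * (1 + Real.sqrt (Real.log ((n:ℝ)+2))) with hbd_def
  have hbd0 : ∀ n m, 0 ≤ bd n m := by
    intro n m
    have h1 := Real.sqrt_nonneg ((n:ℝ)-(m:ℝ))
    have h2 := Real.sqrt_nonneg (Real.log ((n:ℝ)+2))
    positivity
  set F : ℕ → Set Ω := fun n => ⋃ m ∈ Finset.range n, {ω | bd n m ≤ |B (n:ℝ) ω - B (m:ℝ) ω|}
    with hF_def
  have hFbound : ∀ n : ℕ, P (F n) ≤ ENNReal.ofReal (2 * (1/((n:ℝ)+1)^2)) := by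
    intro n
    set L := Real.log ((n:ℝ)+2) with hL_def
    have hsingle : ∀ m : ℕ, m < n → P {ω | bd n m ≤ |B (n:ℝ) ω - B (m:ℝ) ω|}
        ≤ ENNReal.ofReal (2 * Real.exp (-(4.5 + 4.5*L))) := by
      intro m hm
      have hmn : ((m:ℝ)) < (n:ℝ) := by exact_mod_cast hm
      have h1 := inc_tail hB (Nat.cast_nonneg m) hmn (hbd0 n m)
      refine h1.trans (ENNReal.ofReal_le_ofReal ?_)
      gcongr 2 * Real.exp ?_
      set d := (n:ℝ) - (m:ℝ) with hd_def
      have hd1 : 1 ≤ d := by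
        rw [hd_def]
        have : ((m:ℝ)) + 1 ≤ (n:ℝ) := by exact_mod_cast hm
        linarith
      have hd0 : (0:ℝ) < d := by linarith
      have hsqd : Real.sqrt d ^ 2 = d := Real.sq_sqrt hd0.le
      have hbdsq : (bd n m)^2 = 9 * d * (1 + Real.sqrt L)^2 := by
        rw [hbd_def]
        simp only [← hd_def, ← hL_def]
        nlinarith [hsqd]
      have hexp : -(bd n m)^2/(2*d) = -(9/2 * (1 + Real.sqrt L)^2) := by
        rw [hbdsq]; field_simp
      rw [hexp]
      have hsqL : Real.sqrt L ^ 2 = L := Real.sq_sqrt (hL0 n)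
      nlinarith [Real.sqrt_nonneg L]
    calc P (F n) ≤ ∑ m ∈ Finset.range n, P {ω | bd n m ≤ |B (n:ℝ) ω - B (m:ℝ) ω|} :=
        measure_biUnion_finset_le _ _
      _ ≤ ∑ _m ∈ Finset.range n, ENNReal.ofReal (2 * Real.exp (-(4.5 + 4.5*L))) :=
        Finset.sum_le_sum fun m hm => hsingle m (Finset.mem_range.1 hm)
      _ = (n : ℕ) • ENNReal.ofReal (2 * Real.exp (-(4.5 + 4.5*L))) := by
        rw [Finset.sum_const, Finset.card_range]
      _ ≤ ENNReal.ofReal (2 * (1/((n:ℝ)+1)^2)) := by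
        rw [nsmul_eq_mul]
        have h2m : ((n : ℕ) : ℝ≥0∞) = ENNReal.ofReal ((n:ℝ)) := by
          rw [← ENNReal.ofReal_natCast n]
        rw [h2m, ← ENNReal.ofReal_mul (Nat.cast_nonneg n)]
        apply ENNReal.ofReal_le_ofReal
        have hpos : (0:ℝ) < (n:ℝ)+2 := by positivity
        have hL := hL0 n
        have h1 : Real.exp (-(4.5+4.5*L)) ≤ Real.exp (-(3*L)) := by
          rw [Real.exp_le_exp]; linarith
        have h2 : Real.exp (-(3*L)) = (((n:ℝ)+2)^3)⁻¹ := by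
          rw [show (3:ℝ)*L = L + L + L by ring, Real.exp_neg, Real.exp_add, Real.exp_add,
            hL_def, Real.exp_log hpos]
          ring_nf
        have h3 : (n:ℝ) / (((n:ℝ)+2)^3) ≤ 1 / (((n:ℝ)+1)^2) := by
          rw [div_le_div_iff₀ (by positivity) (by positivity)]
          nlinarith [Nat.cast_nonneg (α := ℝ) n]
        have hn0 : (0:ℝ) ≤ (n:ℝ) := Nat.cast_nonneg n
        calc (n:ℝ) * (2*Real.exp (-(4.5+4.5*L))) ≤ (n:ℝ) * (2*Real.exp (-(3*L))) := by
              apply mul_le_mul_of_nonneg_left (by linarith) hn0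
          _ = 2 * ((n:ℝ) / (((n:ℝ)+2)^3)) := by rw [h2]; ring
          _ ≤ 2 * (1/(((n:ℝ)+1)^2)) := by linarith
  have hsummable : Summable (fun n : ℕ => 2 * (1/((n:ℝ)+1)^2)) := by
    apply Summable.mul_left
    have h0 : Summable (fun n : ℕ => 1/(n:ℝ)^2) :=
      Real.summable_one_div_nat_pow.2 one_lt_two
    have := (summable_nat_add_iff 1).2 h0
    refine this.congr fun n => ?_
    push_cast
    ring
  have htop : ∑' n, P (F n) ≠ ⊤ := by
    apply ne_top_of_le_ne_top
      (b := ENNReal.ofReal (∑' n : ℕ, 2 * (1/((n:ℝ)+1)^2)))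
      ENNReal.ofReal_ne_top
    calc ∑' n, P (F n) ≤ ∑' n : ℕ, ENNReal.ofReal (2 * (1/((n:ℝ)+1)^2)) :=
          ENNReal.tsum_le_tsum hFbound
      _ = ENNReal.ofReal (∑' n : ℕ, 2 * (1/((n:ℝ)+1)^2)) :=
          (ENNReal.ofReal_tsum_of_nonneg (fun n => by positivity) hsummable).symm
  filter_upwards [MeasureTheory.ae_eventually_notMem htop] with ω hω
  filter_upwards [hω] with n hn
  intro m hm
  have : ω ∉ {ω | bd n m ≤ |B (n:ℝ) ω - B (m:ℝ) ω|} := by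
    intro hmem
    exact hn (by
      rw [hF_def]
      exact Set.mem_iUnion₂.2 ⟨m, Finset.mem_range.2 hm, hmem⟩)
  simp only [Set.mem_setOf_eq, not_le] at this
  exact this.le

lemma path_inc (hB : IsStandardBrownianMotion P B) :
    ∀ᵐ ω ∂P, ∃ C : ℝ, 0 < C ∧ ∀ s t : ℝ, 0 ≤ s → s ≤ t →
      |B t ω - B s ω| ≤ C * (Real.sqrt (t-s+1) * (1 + Real.sqrt (Real.log (t+2)))) := by
  filter_upwards [goalA hB, goalF hB, hB.cont] with ω hA hF hcont
  obtain ⟨N₁, hN₁⟩ := eventually_atTop.1 hA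
  obtain ⟨N₂, hN₂⟩ := eventually_atTop.1 hF
  set N₀ : ℕ := max N₁ N₂ with hN₀_def
  set b : ℝ → ℝ := fun t => B t ω with hb_def
  obtain ⟨M, hM⟩ := (isCompact_Icc (a := (0:ℝ)) (b := (N₀:ℝ)+1)).exists_bound_of_continuousOn
    hcont.continuousOn
  set M' : ℝ := max M 0 with hM'_def
  have hM'0 : 0 ≤ M' := le_max_right _ _
  have hM' : ∀ x ∈ Icc (0:ℝ) ((N₀:ℝ)+1), |b x| ≤ M' := by
    intro x hx
    calc |b x| = ‖b x‖ := (Real.norm_eq_abs _).symm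
      _ ≤ M := hM x hx
      _ ≤ M' := le_max_left _ _
  have hsqrt1 : ∀ {x : ℝ}, 1 ≤ x → 1 ≤ Real.sqrt x := by
    intro x hx
    rw [show (1:ℝ) = Real.sqrt 1 from (Real.sqrt_one).symm]
    exact Real.sqrt_le_sqrt hx
  have hG1 : ∀ t : ℝ, 0 ≤ t → 1 ≤ 1 + Real.sqrt (Real.log (t+2)) := by
    intro t ht
    have := Real.sqrt_nonneg (Real.log (t+2))
    linarith
  have hGmono : ∀ u v : ℝ, 0 ≤ u → u ≤ v →
      1 + Real.sqrt (Real.log (u+2)) ≤ 1 + Real.sqrt (Real.log (v+2)) := by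
    intro u v hu huv
    have h1 : Real.log (u+2) ≤ Real.log (v+2) := by
      apply Real.log_le_log (by linarith) (by linarith)
    linarith [Real.sqrt_le_sqrt h1]
  have hca : ∀ n : ℕ, N₀ ≤ n → ∀ u : ℝ, (n:ℝ) ≤ u → u ≤ (n:ℝ)+1 →
      |b u - b (n:ℝ)| ≤ 24*(1 + Real.sqrt (Real.log ((n:ℝ)+2))) := by
    intro n hn u h1 h2
    have hc0 : (0:ℝ) ≤ 3 + 3*Real.sqrt (Real.log ((n:ℝ)+2)) := by
      have := Real.sqrt_nonneg (Real.log ((n:ℝ)+2)); linarith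
    have h := chain_dyadic hcont n hc0 (hN₁ n (le_trans (le_max_left _ _) hn)) h1 h2
    calc |b u - b (n:ℝ)| ≤ 8 * (3 + 3*Real.sqrt (Real.log ((n:ℝ)+2))) := h
      _ = 24*(1 + Real.sqrt (Real.log ((n:ℝ)+2))) := by ring
  have claim2 : ∀ s t : ℝ, (N₀:ℝ) ≤ s → s ≤ t →
      |b t - b s| ≤ 51 * (Real.sqrt (t-s+1) * (1 + Real.sqrt (Real.log (t+2)))) := by
    intro s t hs hst
    have hs0 : (0:ℝ) ≤ s := le_trans (Nat.cast_nonneg N₀) hs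
    have ht0 : (0:ℝ) ≤ t := hs0.trans hst
    set a : ℕ := ⌊s⌋₊ with ha_def
    set c' : ℕ := ⌊t⌋₊ with hc'_def
    have haN : N₀ ≤ a := Nat.le_floor hs
    have hcN : N₀ ≤ c' := Nat.le_floor (hs.trans hst)
    have hac : a ≤ c' := Nat.floor_le_floor hst
    have hfa1 : (a:ℝ) ≤ s := Nat.floor_le hs0
    have hfa2 : s < (a:ℝ)+1 := Nat.lt_floor_add_one s
    have hfc1 : (c':ℝ) ≤ t := Nat.floor_le ht0
    have hfc2 : t < (c':ℝ)+1 := Nat.lt_floor_add_one t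
    have hds1 : (1:ℝ) ≤ t-s+1 := by linarith
    have hsq1 : 1 ≤ Real.sqrt (t-s+1) := hsqrt1 hds1
    have hGt : 1 ≤ 1 + Real.sqrt (Real.log (t+2)) := hG1 t ht0
    have h1 : |b t - b (c':ℝ)| ≤ 24*(1 + Real.sqrt (Real.log (t+2))) := by
      refine (hca c' hcN t hfc1 hfc2.le).trans ?_
      have := hGmono (c':ℝ) t (Nat.cast_nonneg c') hfc1
      linarith
    have h2 : |b s - b (a:ℝ)| ≤ 24*(1 + Real.sqrt (Real.log (t+2))) := by
      refine (hca a haN s hfa1 hfa2.le).trans ?_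
      have := hGmono (a:ℝ) t (Nat.cast_nonneg a) (hfa1.trans (hst.trans (le_refl t))|>.trans (le_refl t) |>.trans (le_refl t))
      linarith
    have h3 : |b (c':ℝ) - b (a:ℝ)| ≤
        3*Real.sqrt (t-s+1) * (1 + Real.sqrt (Real.log (t+2))) := by
      rcases eq_or_lt_of_le hac with heq | hlt
      · rw [heq]
        simp only [sub_self, abs_zero]
        positivity
      · have hf := hN₂ c' (le_trans (le_max_right _ _) hcN) a hlt
        refine hf.trans ?_
        have hd : (c':ℝ)-(a:ℝ) ≤ t-s+1 := by
          push_cast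
          linarith
        have hsqd : Real.sqrt ((c':ℝ)-(a:ℝ)) ≤ Real.sqrt (t-s+1) := Real.sqrt_le_sqrt hd
        have hGc : 1 + Real.sqrt (Real.log ((c':ℝ)+2)) ≤ 1 + Real.sqrt (Real.log (t+2)) :=
          hGmono (c':ℝ) t (Nat.cast_nonneg c') hfc1
        have hGc1 : 1 ≤ 1 + Real.sqrt (Real.log ((c':ℝ)+2)) := hG1 (c':ℝ) (Nat.cast_nonneg c')
        have hsqd0 : 0 ≤ Real.sqrt ((c':ℝ)-(a:ℝ)) := Real.sqrt_nonneg _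
        nlinarith
    calc |b t - b s| ≤ |b t - b (c':ℝ)| + |b (c':ℝ) - b (a:ℝ)| + |b (a:ℝ) - b s| := by
          have := abs_sub_le (b t) (b (c':ℝ)) (b s)
          have := abs_sub_le (b (c':ℝ)) (b (a:ℝ)) (b s)
          linarith [abs_sub_le (b t) (b (c':ℝ)) (b s), abs_sub_le (b (c':ℝ)) (b (a:ℝ)) (b s)]
      _ ≤ 24*(1 + Real.sqrt (Real.log (t+2))) + 3*Real.sqrt (t-s+1) * (1 + Real.sqrt (Real.log (t+2)))
          + 24*(1 + Real.sqrt (Real.log (t+2))) := by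
          rw [abs_sub_comm (b (a:ℝ)) (b s)]
          linarith
      _ ≤ 51 * (Real.sqrt (t-s+1) * (1 + Real.sqrt (Real.log (t+2)))) := by
          nlinarith
  refine ⟨51 + 2*M' + 1, by positivity, ?_⟩
  intro s t hs hst
  have ht0 : (0:ℝ) ≤ t := hs.trans hst
  have hds1 : (1:ℝ) ≤ t-s+1 := by linarith
  have hsq1 : 1 ≤ Real.sqrt (t-s+1) := hsqrt1 hds1
  have hGt : 1 ≤ 1 + Real.sqrt (Real.log (t+2)) := hG1 t ht0
  have hfac1 : 1 ≤ Real.sqrt (t-s+1) * (1 + Real.sqrt (Real.log (t+2))) := by nlinarith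
  have hfac0 : 0 ≤ Real.sqrt (t-s+1) * (1 + Real.sqrt (Real.log (t+2))) := by linarith
  by_cases hsN : (N₀:ℝ) ≤ s
  · refine (claim2 s t hsN hst).trans ?_
    apply mul_le_mul_of_nonneg_right (by linarith) hfac0
  · push_neg at hsN
    by_cases htN : t ≤ (N₀:ℝ)+1
    · have hbs := hM' s ⟨hs, by linarith⟩
      have hbt := hM' t ⟨ht0, htN⟩
      calc |b t - b s| ≤ |b t| + |b s| := abs_sub _ _
        _ ≤ 2*M' := by linarith
        _ ≤ 2*M' * (Real.sqrt (t-s+1) * (1 + Real.sqrt (Real.log (t+2)))) := by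
            nlinarith
        _ ≤ (51 + 2*M' + 1) * (Real.sqrt (t-s+1) * (1 + Real.sqrt (Real.log (t+2)))) := by
            nlinarith
    · push_neg at htN
      have hN₀t : (N₀:ℝ) ≤ t := by linarith
      have h1 := claim2 (N₀:ℝ) t (le_refl _) hN₀t
      have h2 : |b (N₀:ℝ) - b s| ≤ 2*M' := by
        have hbs := hM' s ⟨hs, by linarith⟩
        have hbN := hM' (N₀:ℝ) ⟨Nat.cast_nonneg _, by linarith⟩
        calc |b (N₀:ℝ) - b s| ≤ |b (N₀:ℝ)| + |b s| := abs_sub _ _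
          _ ≤ 2*M' := by linarith
      have hmono : Real.sqrt (t-(N₀:ℝ)+1) ≤ Real.sqrt (t-s+1) := by
        apply Real.sqrt_le_sqrt; linarith
      have hsq0 : 0 ≤ Real.sqrt (t-(N₀:ℝ)+1) := Real.sqrt_nonneg _
      calc |b t - b s| ≤ |b t - b (N₀:ℝ)| + |b (N₀:ℝ) - b s| := abs_sub_le _ _ _
        _ ≤ 51 * (Real.sqrt (t-(N₀:ℝ)+1) * (1 + Real.sqrt (Real.log (t+2)))) + 2*M' := by
            linarith
        _ ≤ (51 + 2*M' + 1) * (Real.sqrt (t-s+1) * (1 + Real.sqrt (Real.log (t+2)))) := by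
            nlinarith

end BC


lemma ou_bound {α σ C : ℝ} (hα : 0 < α) (hσ : 0 < σ) (hC : 0 < C)
    {b y : ℝ → ℝ} (hbc : Continuous b) (hyc : Continuous y) (hb0 : b 0 = 0)
    (hy : ∀ t : ℝ, 0 ≤ t → y t = σ * b t - α * ∫ s in (0:ℝ)..t, y s)
    (hinc : ∀ s t : ℝ, 0 ≤ s → s ≤ t →
      |b t - b s| ≤ C * (Real.sqrt (t-s+1) * (1 + Real.sqrt (Real.log (t+2))))) :
    ∃ K : ℝ, 0 < K ∧ ∀ t : ℝ, 0 ≤ t →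
      |y t| ≤ K * (1 + Real.sqrt (Real.log (t+2))) := by
  have hexpc : Continuous fun s : ℝ => Real.exp (α*s) :=
    Real.continuous_exp.comp (continuous_const.mul continuous_id)
  have hEd : ∀ u : ℝ, HasDerivAt (fun v => Real.exp (α*v)) (α * Real.exp (α*u)) u := by
    intro u
    have h1 : HasDerivAt (fun v : ℝ => α*v) α u := by
      simpa using (hasDerivAt_id u).const_mul α
    simpa [mul_comm] using h1.exp
  set A : ℝ → ℝ := fun t => ∫ s in (0:ℝ)..t, y s with hA_def
  have hA : ∀ t : ℝ, HasDerivAt A (y t) t := by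
    intro t
    exact intervalIntegral.integral_hasDerivAt_right (hyc.intervalIntegrable _ _)
      hyc.stronglyMeasurable.stronglyMeasurableAtFilter hyc.continuousAt
  have hAc : Continuous A := by
    have : Differentiable ℝ A := fun t => (hA t).differentiableAt
    exact this.continuous
  have hgEq : ∀ t : ℝ, 0 ≤ t →
      Real.exp (α*t) * A t = σ * ∫ s in (0:ℝ)..t, Real.exp (α*s) * b s := by
    intro t ht
    set g : ℝ → ℝ := fun u => Real.exp (α*u) * A u - σ * ∫ s in (0:ℝ)..u, Real.exp (α*s) * b s
      with hg_def
    set d : ℝ → ℝ := fun u => Real.exp (α*u) * (α * A u + y u - σ * b u) with hd_def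
    have hInt2 : ∀ u : ℝ, HasDerivAt (fun v => ∫ s in (0:ℝ)..v, Real.exp (α*s) * b s)
        (Real.exp (α*u) * b u) u := by
      intro u
      have hcont2 : Continuous fun s => Real.exp (α*s) * b s := hexpc.mul hbc
      exact intervalIntegral.integral_hasDerivAt_right (hcont2.intervalIntegrable _ _)
        hcont2.stronglyMeasurable.stronglyMeasurableAtFilter hcont2.continuousAt
    have hg : ∀ u : ℝ, HasDerivAt g (d u) u := by
      intro u
      have h1 := ((hEd u).mul (hA u)).sub ((hInt2 u).const_mul σ)
      exact h1.congr_deriv (by simp only [hd_def]; ring)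
    have hdc : Continuous d :=
      hexpc.mul (((continuous_const.mul hAc).add hyc).sub (continuous_const.mul hbc))
    have hint : ∫ u in (0:ℝ)..t, d u = g t - g 0 :=
      intervalIntegral.integral_eq_sub_of_hasDerivAt (fun u _ => hg u)
        (hdc.intervalIntegrable _ _)
    have hzero : ∫ u in (0:ℝ)..t, d u = 0 := by
      rw [intervalIntegral.integral_congr (g := fun _ => (0:ℝ))]
      · simp
      · intro u hu
        rw [Set.uIcc_of_le ht] at hu
        have hu0 : 0 ≤ u := hu.1
        rw [hd_def]
        simp only
        rw [hy u hu0]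
        ring
    have hg0 : g 0 = 0 := by
      rw [hg_def]
      simp [hA_def]
    have : g t = 0 := by rw [hzero] at hint; linarith
    rw [hg_def] at this
    simp only at this
    linarith
  refine ⟨2*σ*C*(1+1/α), by positivity, ?_⟩
  intro t ht
  set G : ℝ := 1 + Real.sqrt (Real.log (t+2)) with hG_def
  have hG1 : 1 ≤ G := by
    have h1 : 0 ≤ Real.sqrt (Real.log (t+2)) := Real.sqrt_nonneg _
    rw [hG_def]; linarith
  have hG0 : 0 ≤ G := by linarith
  have hEt0 : (0:ℝ) < Real.exp (α*t) := Real.exp_pos _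
  have hAt : (∫ s in (0:ℝ)..t, y s) = σ * (∫ s in (0:ℝ)..t, Real.exp (α*s) * b s)
      / Real.exp (α*t) := by
    rw [eq_div_iff (ne_of_gt hEt0)]
    have := hgEq t ht
    rw [hA_def] at this
    simp only at this
    linarith
  have hIexp : ∫ s in (0:ℝ)..t, Real.exp (α*s) * ((t-s)+1)
      = Real.exp (α*t)*(1/α+1/α^2) - ((t+1)/α + 1/α^2) := by
    have hF : ∀ s : ℝ, HasDerivAt (fun u => Real.exp (α*u) * (((t-u)+1)/α + 1/α^2))
        (Real.exp (α*s) * ((t-s)+1)) s := by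
      intro s
      have hlin : HasDerivAt (fun u : ℝ => ((t-u)+1)/α + 1/α^2) (-(1/α)) s := by
        have h2 : HasDerivAt (fun u : ℝ => t-u) (-1) s := by
          simpa using (hasDerivAt_id s).const_sub t
        have h3 : HasDerivAt (fun u : ℝ => (t-u)+1) (-1) s := h2.add_const 1
        have h4 := (h3.div_const α).add_const (1/α^2)
        exact h4.congr_deriv (by ring)
      have := (hEd s).mul hlin
      exact this.congr_deriv (by field_simp; ring)
    have hcont3 : Continuous fun s => Real.exp (α*s) * ((t-s)+1) :=
      hexpc.mul ((continuous_const.sub continuous_id).add continuous_const)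
    have := intervalIntegral.integral_eq_sub_of_hasDerivAt (a := (0:ℝ)) (b := t)
      (f' := fun s => Real.exp (α*s) * ((t-s)+1)) (fun s _ => hF s)
      (hcont3.intervalIntegrable _ _)
    rw [this]
    simp only [sub_zero, mul_zero, Real.exp_zero, sub_self]
    ring_nf
  have hIe : ∫ s in (0:ℝ)..t, Real.exp (α*s) = (Real.exp (α*t) - 1)/α := by
    have hF : ∀ s : ℝ, HasDerivAt (fun u => Real.exp (α*u)/α) (Real.exp (α*s)) s := by
      intro s
      have := (hEd s).div_const α
      exact this.congr_deriv (by field_simp)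
    have := intervalIntegral.integral_eq_sub_of_hasDerivAt (a := (0:ℝ)) (b := t)
      (f' := fun s => Real.exp (α*s)) (fun s _ => hF s) (hexpc.intervalIntegrable _ _)
    rw [this]
    simp only [mul_zero, Real.exp_zero]
    field_simp
  have hsplit2 : ∫ s in (0:ℝ)..t, Real.exp (α*s) * (b t - b s)
      = b t * ((Real.exp (α*t)-1)/α) - ∫ s in (0:ℝ)..t, Real.exp (α*s) * b s := by
    have h1 : ∫ s in (0:ℝ)..t, Real.exp (α*s) * (b t - b s)
        = (∫ s in (0:ℝ)..t, Real.exp (α*s) * b t) - ∫ s in (0:ℝ)..t, Real.exp (α*s) * b s := by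
      rw [← intervalIntegral.integral_sub (f := fun s => Real.exp (α*s) * b t) (g := fun s => Real.exp (α*s) * b s) ((hexpc.mul continuous_const).intervalIntegrable _ _)
        ((hexpc.mul hbc).intervalIntegrable _ _)]
      congr 1
      funext s
      ring
    rw [h1, intervalIntegral.integral_mul_const, hIe]
    ring
  have hysplit : y t = σ * (Real.exp (α*t))⁻¹ * b t
      + α*σ*(Real.exp (α*t))⁻¹ * ∫ s in (0:ℝ)..t, Real.exp (α*s) * (b t - b s) := by
    rw [hy t ht, hAt, hsplit2]
    field_simp
    ring
  have hbound1 : |∫ s in (0:ℝ)..t, Real.exp (α*s) * (b t - b s)|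
      ≤ C * G * (Real.exp (α*t)*(1/α+1/α^2)) := by
    have hcont5 : Continuous fun s => Real.exp (α*s) * (b t - b s) :=
      hexpc.mul (continuous_const.sub hbc)
    have habs : |∫ s in (0:ℝ)..t, Real.exp (α*s) * (b t - b s)|
        ≤ ∫ s in (0:ℝ)..t, |Real.exp (α*s) * (b t - b s)| :=
      intervalIntegral.abs_integral_le_integral_abs ht
    have hcont6 : Continuous fun s => |Real.exp (α*s) * (b t - b s)| := hcont5.abs
    have hcont7 : Continuous fun s : ℝ => Real.exp (α*s) * (C * G * ((t-s)+1)) :=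
      hexpc.mul (continuous_const.mul
        ((continuous_const.sub continuous_id).add continuous_const))
    have hmono : ∫ s in (0:ℝ)..t, |Real.exp (α*s) * (b t - b s)|
        ≤ ∫ s in (0:ℝ)..t, Real.exp (α*s) * (C * G * ((t-s)+1)) := by
      apply intervalIntegral.integral_mono_on ht (hcont6.intervalIntegrable _ _)
        (hcont7.intervalIntegrable _ _)
      intro s hs
      rw [abs_mul, abs_of_pos (Real.exp_pos _)]
      apply mul_le_mul_of_nonneg_left _ (Real.exp_pos _).le
      have hs0 : 0 ≤ s := hs.1
      have hst : s ≤ t := hs.2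
      have h1 := hinc s t hs0 hst
      have h2 : Real.sqrt (t-s+1) ≤ (t-s)+1 := by
        nlinarith [Real.sq_sqrt (by linarith : (0:ℝ) ≤ t-s+1), Real.sqrt_nonneg (t-s+1)]
      have h3 : 0 ≤ Real.sqrt (t-s+1) := Real.sqrt_nonneg _
      calc |b t - b s| ≤ C * (Real.sqrt (t-s+1) * G) := h1
        _ ≤ C * G * ((t-s)+1) := by
            linarith [mul_le_mul_of_nonneg_left h2 (mul_nonneg hC.le hG0)]
    have hint_le : ∫ s in (0:ℝ)..t, Real.exp (α*s) * (C * G * ((t-s)+1))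
        ≤ C * G * (Real.exp (α*t)*(1/α+1/α^2)) := by
      have h1 : ∫ s in (0:ℝ)..t, Real.exp (α*s) * (C * G * ((t-s)+1))
          = C * G * ∫ s in (0:ℝ)..t, Real.exp (α*s) * ((t-s)+1) := by
        rw [← intervalIntegral.integral_const_mul]
        congr 1
        funext s
        ring
      rw [h1, hIexp]
      have h2 : 0 ≤ (t+1)/α + 1/α^2 := by positivity
      nlinarith [mul_nonneg (mul_nonneg hC.le hG0) h2, mul_nonneg hC.le hG0]
    linarith
  have hbt : |b t| ≤ C * ((t+1) * G) := by
    have h1 := hinc 0 t le_rfl ht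
    rw [hb0, sub_zero, sub_zero] at h1
    have h2 : Real.sqrt (t+1) ≤ t+1 := by
      nlinarith [Real.sq_sqrt (by linarith : (0:ℝ) ≤ t+1), Real.sqrt_nonneg (t+1)]
    have h3 : 0 ≤ Real.sqrt (t+1) := Real.sqrt_nonneg _
    calc |b t| ≤ C * (Real.sqrt (t+1) * G) := h1
      _ ≤ C * ((t+1) * G) := by
          linarith [mul_le_mul_of_nonneg_left (mul_le_mul_of_nonneg_right h2 hG0) hC.le]
  have hdecay : (t+1) * (Real.exp (α*t))⁻¹ ≤ 1 + 1/α := by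
    have h1 : α*t ≤ Real.exp (α*t) := by linarith [Real.add_one_le_exp (α*t)]
    have h2 : (Real.exp (α*t))⁻¹ ≤ 1 := by
      rw [inv_le_one_iff₀]
      right
      rw [← Real.exp_zero]
      exact Real.exp_le_exp.2 (by positivity)
    have h3 : t * (Real.exp (α*t))⁻¹ ≤ 1/α := by
      rw [le_div_iff₀ hα]
      calc t * (Real.exp (α*t))⁻¹ * α = (α*t) * (Real.exp (α*t))⁻¹ := by ring
        _ ≤ Real.exp (α*t) * (Real.exp (α*t))⁻¹ :=
            mul_le_mul_of_nonneg_right h1 (by positivity)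
        _ = 1 := mul_inv_cancel₀ (ne_of_gt hEt0)
    nlinarith [inv_nonneg.2 hEt0.le]
  -- final combination
  rw [hysplit]
  have hEtinv0 : (0:ℝ) ≤ (Real.exp (α*t))⁻¹ := by positivity
  have habs2 : |σ * (Real.exp (α*t))⁻¹ * b t
      + α*σ*(Real.exp (α*t))⁻¹ * ∫ s in (0:ℝ)..t, Real.exp (α*s) * (b t - b s)|
      ≤ σ * (Real.exp (α*t))⁻¹ * |b t|
      + α*σ*(Real.exp (α*t))⁻¹ * |∫ s in (0:ℝ)..t, Real.exp (α*s) * (b t - b s)| := by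
    refine (abs_add_le _ _).trans ?_
    rw [abs_mul (σ * (Real.exp (α*t))⁻¹) (b t),
      abs_mul (α*σ*(Real.exp (α*t))⁻¹) (∫ s in (0:ℝ)..t, Real.exp (α*s) * (b t - b s)),
      abs_of_pos (show (0:ℝ) < σ * (Real.exp (α*t))⁻¹ by positivity),
      abs_of_pos (show (0:ℝ) < α*σ*(Real.exp (α*t))⁻¹ by positivity)]
  have hterm2 : α*σ*(Real.exp (α*t))⁻¹ * (C * G * (Real.exp (α*t)*(1/α+1/α^2)))
      = σ*C*G*(1+1/α) := by
    field_simp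
  have hterm1 : σ * (Real.exp (α*t))⁻¹ * (C*((t+1)*G)) = σ*C*G*((t+1)*(Real.exp (α*t))⁻¹) := by
    ring
  have hfin1 : σ * (Real.exp (α*t))⁻¹ * |b t| ≤ σ*C*G*(1+1/α) := by
    calc σ * (Real.exp (α*t))⁻¹ * |b t| ≤ σ * (Real.exp (α*t))⁻¹ * (C*((t+1)*G)) := by
          apply mul_le_mul_of_nonneg_left hbt (by positivity)
      _ = σ*C*G*((t+1)*(Real.exp (α*t))⁻¹) := hterm1
      _ ≤ σ*C*G*(1+1/α) := by
          apply mul_le_mul_of_nonneg_left hdecay (by positivity)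
  have hfin2 : α*σ*(Real.exp (α*t))⁻¹ * |∫ s in (0:ℝ)..t, Real.exp (α*s) * (b t - b s)|
      ≤ σ*C*G*(1+1/α) := by
    calc α*σ*(Real.exp (α*t))⁻¹ * |∫ s in (0:ℝ)..t, Real.exp (α*s) * (b t - b s)|
        ≤ α*σ*(Real.exp (α*t))⁻¹ * (C * G * (Real.exp (α*t)*(1/α+1/α^2))) := by
          apply mul_le_mul_of_nonneg_left hbound1 (by positivity)
      _ = σ*C*G*(1+1/α) := hterm2
  calc |σ * (Real.exp (α*t))⁻¹ * b t
      + α*σ*(Real.exp (α*t))⁻¹ * ∫ s in (0:ℝ)..t, Real.exp (α*s) * (b t - b s)|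
      ≤ σ * (Real.exp (α*t))⁻¹ * |b t|
      + α*σ*(Real.exp (α*t))⁻¹ * |∫ s in (0:ℝ)..t, Real.exp (α*s) * (b t - b s)| := habs2
    _ ≤ σ*C*G*(1+1/α) + σ*C*G*(1+1/α) := add_le_add hfin1 hfin2
    _ = 2*σ*C*(1+1/α) * G := by ring


private lemma sqrt_le_eps {x ε : ℝ} (hx : 0 ≤ x) (hε : 0 < ε) :
    Real.sqrt x ≤ ε * x + 1/(4*ε) := by
  have h1 : Real.sqrt x - ε*x ≤ 1/(4*ε) := by
    rw [le_div_iff₀ (by positivity)]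
    have h2 : 4*ε^2*x = 4*ε^2*(Real.sqrt x)^2 := by rw [Real.sq_sqrt hx]
    nlinarith [sq_nonneg (2*ε*Real.sqrt x - 1), h2]
  linarith

lemma final_path {νv N i0 γ μ K : ℝ} (hN : 0 < N) (hγμ : 0 < γ + μ)
    (hi0 : 0 < i0) (hi0N : i0 < N)
    (hνle : νv ≤ 0) {y : ℝ → ℝ} (hyc : Continuous y) (hK : 0 < K)
    (hybound : ∀ t : ℝ, 0 ≤ t → |y t| ≤ K * (1 + Real.sqrt (Real.log (t+2))))
    {I : ℝ → ℝ}
    (hI : ∀ t : ℝ, I t = N * i0 * Real.exp (νv * t + N * y t) /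
      (N - i0 + i0 * Real.exp (νv * t + N * y t) +
        i0 * (γ + μ) * ∫ s in (0:ℝ)..t, Real.exp (νv * s + N * y s))) :
    Tendsto I atTop (nhds 0) := by
  set ε : ℝ := 1/(4*N*K) with hε_def
  have hεpos : 0 < ε := by rw [hε_def]; positivity
  set C₁ : ℝ := N*K + N*K/(4*ε) with hC₁_def
  have hC₁pos : 0 < C₁ := by rw [hC₁_def]; positivity
  have hlog0 : ∀ t : ℝ, 0 ≤ t → 0 ≤ Real.log (t+2) :=
    fun t ht => Real.log_nonneg (by linarith)
  have hkey : ∀ t : ℝ, 0 ≤ t → N * |y t| ≤ (1/4)*Real.log (t+2) + C₁ := by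
    intro t ht
    have h1 := hybound t ht
    have h2 := sqrt_le_eps (hlog0 t ht) hεpos
    have h3 : N * |y t| ≤ N*K + N*K*Real.sqrt (Real.log (t+2)) := by nlinarith
    have h4 : N*K*Real.sqrt (Real.log (t+2)) ≤ N*K*(ε*Real.log (t+2) + 1/(4*ε)) := by
      apply mul_le_mul_of_nonneg_left h2 (by positivity)
    have h5 : N*K*ε = 1/4 := by
      rw [hε_def]; field_simp
    have h6 : N*K*(ε*Real.log (t+2) + 1/(4*ε))
        = (1/4)*Real.log (t+2) + N*K/(4*ε) := by
      linear_combination Real.log (t+2) * h5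
    have h7 : C₁ = N*K + N*K/(4*ε) := hC₁_def
    linarith
  have hup : ∀ t : ℝ, 0 ≤ t → N * y t ≤ (1/4)*Real.log (t+2) + C₁ := by
    intro t ht
    have h1 := hkey t ht
    have h2 := mul_le_mul_of_nonneg_left (le_abs_self (y t)) hN.le
    linarith
  have hlo : ∀ t : ℝ, 0 ≤ t → -((1/4)*Real.log (t+2) + C₁) ≤ N * y t := by
    intro t ht
    have h1 := hkey t ht
    have h2 := mul_le_mul_of_nonneg_left (neg_abs_le (y t)) hN.le
    have h3 : N * -|y t| = -(N * |y t|) := by ring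
    linarith [h2, h3 ▸ h2]
  set f : ℝ → ℝ := fun s => Real.exp (νv * s + N * y s) with hf_def
  have hfc : Continuous f := by
    apply Real.continuous_exp.comp
    exact (continuous_const.mul continuous_id).add (continuous_const.mul hyc)
  have hJ0 : ∀ t : ℝ, 0 ≤ t → 0 ≤ ∫ s in (0:ℝ)..t, f s := by
    intro t ht
    apply intervalIntegral.integral_nonneg ht
    intro s _
    exact (Real.exp_pos _).le
  have hNi0 : (0:ℝ) < N - i0 := by linarith
  have hDpos : ∀ t : ℝ, 0 ≤ t → (0:ℝ) < N - i0 + i0 * Real.exp (νv * t + N * y t) +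
      i0 * (γ + μ) * ∫ s in (0:ℝ)..t, f s := by
    intro t ht
    have h1 := hJ0 t ht
    have h2 : (0:ℝ) < i0 * Real.exp (νv * t + N * y t) := by positivity
    nlinarith [mul_nonneg (mul_nonneg hi0.le hγμ.le) h1]
  have hIpos : ∀ t : ℝ, 0 ≤ t → 0 ≤ I t := by
    intro t ht
    rw [hI t]
    exact div_nonneg (by positivity) (hDpos t ht).le
  rcases lt_or_eq_of_le hνle with hνlt | hνeq
  · -- case ν < 0 : numerator tends to 0, denominator ≥ N - i0
    have hIle : ∀ t : ℝ, 0 ≤ t →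
        I t ≤ (N * i0 / (N-i0)) * Real.exp (νv * t + ((1/4)*Real.log (t+2) + C₁)) := by
      intro t ht
      rw [hI t]
      have h1 : N * i0 * Real.exp (νv * t + N * y t) /
          (N - i0 + i0 * Real.exp (νv * t + N * y t) +
            i0 * (γ + μ) * ∫ s in (0:ℝ)..t, f s)
          ≤ N * i0 * Real.exp (νv * t + N * y t) / (N - i0) := by
        apply div_le_div_of_nonneg_left (by positivity) hNi0
        have h2 : (0:ℝ) < i0 * Real.exp (νv * t + N * y t) := by positivity
        nlinarith [mul_nonneg (mul_nonneg hi0.le hγμ.le) (hJ0 t ht)]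
      refine h1.trans ?_
      rw [div_eq_mul_inv, div_eq_mul_inv]
      have h3 : Real.exp (νv * t + N * y t) ≤ Real.exp (νv * t + ((1/4)*Real.log (t+2) + C₁)) :=
        Real.exp_le_exp.2 (by linarith [hup t ht])
      linarith [mul_le_mul_of_nonneg_left h3
        (show (0:ℝ) ≤ N*i0*(N-i0)⁻¹ by positivity)]
    have hatBot : Tendsto (fun t : ℝ => νv * t + ((1/4)*Real.log (t+2) + C₁)) atTop atBot := by
      have hlin : Tendsto (fun t : ℝ => (νv/2) * t + (C₁ + 1/(8*(-νv)) + (-νv) + 1/2))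
          atTop atBot := by
        apply tendsto_atBot_add_const_right
        exact (tendsto_const_mul_atBot_of_neg (by linarith)).2 tendsto_id
      apply tendsto_atBot_mono' atTop ?_ hlin
      filter_upwards [eventually_ge_atTop (0:ℝ)] with t ht
      have hlogle : Real.log (t+2) = 2 * Real.log (Real.sqrt (t+2)) := by
        rw [Real.log_sqrt (by linarith)]; ring
      have h1 : Real.log (Real.sqrt (t+2)) ≤ Real.sqrt (t+2) - 1 :=
        Real.log_le_sub_one_of_pos (Real.sqrt_pos.2 (by linarith))
      have h2 : Real.sqrt (t+2) ≤ (-νv) * (t+2) + 1/(4*(-νv)) :=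
        sqrt_le_eps (by linarith) (by linarith)
      have hvne : νv ≠ 0 := ne_of_lt hνlt
      have h3 : 1/(4*(-νv)) = 1/(8*(-νv)) + 1/(8*(-νv)) := by
        field_simp
        ring
      linarith
    have hg : Tendsto (fun t : ℝ => (N * i0 / (N-i0)) *
        Real.exp (νv * t + ((1/4)*Real.log (t+2) + C₁))) atTop (nhds 0) := by
      rw [show (0:ℝ) = (N * i0 / (N-i0)) * 0 by ring]
      exact (Real.tendsto_exp_atBot.comp hatBot).const_mul _
    apply squeeze_zero' ?_ ?_ hg
    · filter_upwards [eventually_ge_atTop (0:ℝ)] with t ht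
      exact hIpos t ht
    · filter_upwards [eventually_ge_atTop (0:ℝ)] with t ht
      exact hIle t ht
  · -- case ν = 0
    subst hνeq
    have hsqrt_div : Tendsto (fun t : ℝ => Real.sqrt (t+2)/t) atTop (nhds 0) := by
      have h2t : Tendsto (fun t : ℝ => 2/Real.sqrt t) atTop (nhds 0) := by
        rw [show (0:ℝ) = 2 * 0 by ring]
        have hsqrtTop : Tendsto Real.sqrt atTop atTop := by
          apply tendsto_atTop_atTop.2
          intro c
          refine ⟨max 0 (c^2), fun a ha => ?_⟩
          have h0 : (0:ℝ) ≤ a := le_trans (le_max_left _ _) ha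
          have hb2 : c^2 ≤ a := le_trans (le_max_right _ _) ha
          rcases le_or_gt c 0 with hb | hb
          · exact hb.trans (Real.sqrt_nonneg a)
          · calc c = Real.sqrt (c^2) := (Real.sqrt_sq hb.le).symm
              _ ≤ Real.sqrt a := Real.sqrt_le_sqrt hb2
        exact (tendsto_inv_atTop_zero.comp hsqrtTop).const_mul 2 |>.congr
          (fun t => (div_eq_mul_inv 2 (Real.sqrt t)).symm)
      apply squeeze_zero' ?_ ?_ h2t
      · filter_upwards [eventually_ge_atTop (2:ℝ)] with t ht
        positivity
      · filter_upwards [eventually_ge_atTop (2:ℝ)] with t ht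
        have ht0 : (0:ℝ) < t := by linarith
        have hsqt : 0 < Real.sqrt t := Real.sqrt_pos.2 ht0
        rw [div_le_div_iff₀ ht0 hsqt]
        have h1 : Real.sqrt (t+2) ≤ 2*Real.sqrt t := by
          rw [show (2:ℝ)*Real.sqrt t = Real.sqrt (4*t) by
            rw [show (4:ℝ)*t = 2^2*t by ring, Real.sqrt_mul (by norm_num), Real.sqrt_sq (by norm_num)]]
          exact Real.sqrt_le_sqrt (by linarith)
        have h2 : Real.sqrt t * Real.sqrt t = t := Real.mul_self_sqrt ht0.le
        nlinarith [Real.sqrt_nonneg (t+2)]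
    have hIle2 : ∀ t : ℝ, 1 ≤ t →
        I t ≤ (2*N*Real.exp (2*C₁)/(γ+μ)) * (Real.sqrt (t+2) / t) := by
      intro t ht1
      have ht0 : (0:ℝ) ≤ t := by linarith
      have htpos : (0:ℝ) < t := by linarith
      set L : ℝ := Real.log (t+2) with hL_def
      set X : ℝ := (1/4)*L + C₁ with hX_def
      have hXpos : 0 < X := by
        have := hlog0 t ht0
        rw [hX_def]; positivity
      -- lower bound for the integral
      have hInt1 : IntervalIntegrable f volume 0 (t/2) := hfc.intervalIntegrable _ _
      have hInt2 : IntervalIntegrable f volume (t/2) t := hfc.intervalIntegrable _ _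
      have hsplitJ : (∫ s in (0:ℝ)..(t/2), f s) + (∫ s in (t/2)..t, f s)
          = ∫ s in (0:ℝ)..t, f s :=
        intervalIntegral.integral_add_adjacent_intervals hInt1 hInt2
      have h1 : 0 ≤ ∫ s in (0:ℝ)..(t/2), f s := by
        apply intervalIntegral.integral_nonneg (by linarith)
        intro s _
        exact (Real.exp_pos _).le
      have h2 : (∫ s in (t/2)..t, (fun _ : ℝ => Real.exp (-X)) s) ≤ ∫ s in (t/2)..t, f s := by
        apply intervalIntegral.integral_mono_on (by linarith)
          (intervalIntegrable_const) hInt2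
        intro s hs
        have hs0 : 0 ≤ s := le_trans (by linarith) hs.1
        have hst : s ≤ t := hs.2
        rw [hf_def]
        simp only
        apply Real.exp_le_exp.2
        have h3 := hlo s hs0
        have h4 : Real.log (s+2) ≤ L := by
          rw [hL_def]
          exact Real.log_le_log (by linarith) (by linarith)
        rw [hX_def]
        linarith
      have h3 : (∫ s in (t/2)..t, (fun _ : ℝ => Real.exp (-X)) s) = (t/2) * Real.exp (-X) := by
        rw [intervalIntegral.integral_const]
        rw [smul_eq_mul]
        ring_nf
      have hJlow : (t/2) * Real.exp (-X) ≤ ∫ s in (0:ℝ)..t, f s := by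
        rw [← hsplitJ, ← h3]
        linarith
      have hJpos : (0:ℝ) < ∫ s in (0:ℝ)..t, f s :=
        lt_of_lt_of_le (by positivity) hJlow
      -- numerator bound
      have hnum : N * i0 * Real.exp (0 * t + N * y t) ≤ N * i0 * Real.exp X := by
        apply mul_le_mul_of_nonneg_left _ (by positivity)
        apply Real.exp_le_exp.2
        have := hup t ht0
        rw [hX_def]
        linarith
      -- I t ≤ num / (i0 (γ+μ) J)
      have hstep1 : I t ≤ N * i0 * Real.exp (0 * t + N * y t)
          / (i0 * (γ+μ) * ∫ s in (0:ℝ)..t, f s) := by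
        rw [hI t]
        apply div_le_div_of_nonneg_left (by positivity) (by positivity)
        have h5 : (0:ℝ) < i0 * Real.exp (0 * t + N * y t) := by positivity
        linarith [h5, hNi0]
      have hstep2 : N * i0 * Real.exp (0 * t + N * y t)
          / (i0 * (γ+μ) * ∫ s in (0:ℝ)..t, f s)
          ≤ (N * i0 * Real.exp X) / (i0 * (γ+μ) * ((t/2) * Real.exp (-X))) := by
        apply div_le_div₀ (by positivity) hnum (by positivity)
        apply mul_le_mul_of_nonneg_left hJlow (by positivity)
      have hsq : Real.exp (L/2) = Real.sqrt (t+2) := by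
        rw [Real.sqrt_eq_rpow, Real.rpow_def_of_pos (by linarith), hL_def]
        congr 1
        ring
      have hstep3 : (N * i0 * Real.exp X) / (i0 * (γ+μ) * ((t/2) * Real.exp (-X)))
          = (2*N*Real.exp (2*C₁)/(γ+μ)) * (Real.sqrt (t+2) / t) := by
        rw [← hsq, Real.exp_neg]
        have hexpXne : Real.exp X ≠ 0 := (Real.exp_pos _).ne'
        have hprod : Real.exp (2*C₁) * Real.exp (L/2) = Real.exp X * Real.exp X := by
          rw [← Real.exp_add, ← Real.exp_add]
          congr 1
          rw [hX_def]
          ring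
        field_simp
        linear_combination (-1) * hprod
      calc I t ≤ N * i0 * Real.exp (0 * t + N * y t)
          / (i0 * (γ+μ) * ∫ s in (0:ℝ)..t, f s) := hstep1
        _ ≤ (N * i0 * Real.exp X) / (i0 * (γ+μ) * ((t/2) * Real.exp (-X))) := hstep2
        _ = (2*N*Real.exp (2*C₁)/(γ+μ)) * (Real.sqrt (t+2) / t) := hstep3
    have hg : Tendsto (fun t : ℝ => (2*N*Real.exp (2*C₁)/(γ+μ)) * (Real.sqrt (t+2) / t))
        atTop (nhds 0) := by
      rw [show (0:ℝ) = (2*N*Real.exp (2*C₁)/(γ+μ)) * 0 by ring]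
      exact hsqrt_div.const_mul _
    apply squeeze_zero' ?_ ?_ hg
    · filter_upwards [eventually_ge_atTop (1:ℝ)] with t ht
      exact hIpos t (by linarith)
    · filter_upwards [eventually_ge_atTop (1:ℝ)] with t ht
      exact hIle2 t ht


/-- Stochastic extinction theorem: with `Y` the mean-reverting OU process and
`ν = βN - (γ+μ) ≤ 0`, the perturbed SIS process tends to `0` almost surely. -/
theorem sis_ou_extinction {Ω : Type*} [MeasurableSpace Ω]
    (P : Measure Ω) (B : ℝ → Ω → ℝ) (hB : IsStandardBrownianMotion P B)
    (α σ N γ μ β i0 : ℝ) (hα : 0 < α) (hσ : 0 < σ)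
    (hN : 0 < N) (hγ : 0 < γ) (hμ : 0 < μ) (hβ : 0 < β)
    (hi0 : i0 ∈ Set.Ioo 0 N)
    (ν : ℝ) (hν : ν = β * N - (γ + μ)) (hνle : ν ≤ 0)
    (Y : ℝ → Ω → ℝ) (hYmeas : ∀ t, Measurable (Y t))
    (hYcont : ∀ᵐ ω ∂P, Continuous fun t => Y t ω)
    (hY : ∀ᵐ ω ∂P, ∀ t : ℝ, 0 ≤ t →
      Y t ω = σ * B t ω - α * ∫ s in (0:ℝ)..t, Y s ω)
    (I : ℝ → Ω → ℝ)
    (hI : ∀ ω, ∀ t : ℝ, I t ω = N * i0 * Real.exp (ν * t + N * Y t ω) /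
      (N - i0 + i0 * Real.exp (ν * t + N * Y t ω) +
        i0 * (γ + μ) * ∫ s in (0:ℝ)..t, Real.exp (ν * s + N * Y s ω))) :
    ∀ᵐ ω ∂P, Tendsto (fun t => I t ω) atTop (nhds 0) := by
  have hγμ : 0 < γ + μ := by linarith
  obtain ⟨hi0pos, hi0N⟩ := hi0
  filter_upwards [path_inc hB, hYcont, hY, hB.cont] with ω hCex hyc hy hbc
  obtain ⟨C, hCpos, hinc⟩ := hCex
  obtain ⟨K, hKpos, hyb⟩ := ou_bound hα hσ hCpos hbc hyc (hB.init ω) hy hinc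
  exact final_path hN hγμ hi0pos hi0N hνle hyc hKpos hyb (fun t => hI ω t)
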